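/- For positive integers n, k with n ≥ 2 or k ≥ 10 or k ≤ 3, and k not a perfect square, the set of primes p with p² = kn² + ℓn + 1 for some integer ℓ, |ℓ| ≤ 2√k, contains at most one element, unless n = 1 and 4 ≤ k ≤ 9 (in which case it can be {2,3}), or k = h² with both hn−1 and hn+1 prime (in which case it is {hn−1, hn+1}). -/

import Mathlib

lemma stmt_6_aux (n k : ℕ) (hn : 0 < n) (hk : 0 < k)
    (hcond : 2 ≤ n ∨ 10 ≤ k ∨ k ≤ 3) (hsq : ¬ ∃ h : ℕ, k = h ^ 2)
    (p q : ℕ) (hpq : p < q)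
    (hp : p.Prime ∧ ∃ ℓ : ℤ, |(ℓ : ℝ)| ≤ 2 * Real.sqrt k ∧
        (p : ℤ) ^ 2 = k * n ^ 2 + ℓ * n + 1)
    (hq : q.Prime ∧ ∃ ℓ : ℤ, |(ℓ : ℝ)| ≤ 2 * Real.sqrt k ∧
        (q : ℤ) ^ 2 = k * n ^ 2 + ℓ * n + 1) : False := by
  obtain ⟨hpP, ℓ₁, hl1, he1⟩ := hp
  obtain ⟨hqP, ℓ₂, hl2, he2⟩ := hq
  set s : ℝ := (n : ℝ) * Real.sqrt k with hs
  have hks : Real.sqrt (k : ℝ) ^ 2 = (k : ℝ) := Real.sq_sqrt (by positivity)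
  have hsk0 : 0 ≤ Real.sqrt (k : ℝ) := Real.sqrt_nonneg _
  have hk1R : (1 : ℝ) ≤ (k : ℝ) := by exact_mod_cast hk
  have hk1 : (1 : ℝ) ≤ Real.sqrt k := by nlinarith
  have hn1R : (1 : ℝ) ≤ (n : ℝ) := by exact_mod_cast hn
  have hs1 : (1 : ℝ) ≤ s := by
    rw [hs]; nlinarith
  have he1R : (p : ℝ) ^ 2 = (k : ℝ) * (n : ℝ) ^ 2 + (ℓ₁ : ℝ) * n + 1 := by
    exact_mod_cast congrArg (Int.cast : ℤ → ℝ) he1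
  have he2R : (q : ℝ) ^ 2 = (k : ℝ) * (n : ℝ) ^ 2 + (ℓ₂ : ℝ) * n + 1 := by
    exact_mod_cast congrArg (Int.cast : ℤ → ℝ) he2
  have habs1 := abs_le.mp hl1
  have habs2 := abs_le.mp hl2
  have hn0R : (0 : ℝ) ≤ (n : ℝ) := by positivity
  -- squared bounds
  have expu : (s + 1) ^ 2 = (k : ℝ) * n ^ 2 + 2 * Real.sqrt k * n + 1 := by
    rw [hs]; linear_combination (n : ℝ) ^ 2 * hks
  have expl : (s - 1) ^ 2 = (k : ℝ) * n ^ 2 - 2 * Real.sqrt k * n + 1 := by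
    rw [hs]; linear_combination (n : ℝ) ^ 2 * hks
  have hsq1u : (p : ℝ) ^ 2 ≤ (s + 1) ^ 2 := by
    have := mul_le_mul_of_nonneg_right habs1.2 hn0R
    rw [expu]; linarith
  have hsq1l : (s - 1) ^ 2 ≤ (p : ℝ) ^ 2 := by
    have := mul_le_mul_of_nonneg_right habs1.1 hn0R
    rw [expl]; linarith
  have hsq2u : (q : ℝ) ^ 2 ≤ (s + 1) ^ 2 := by
    have := mul_le_mul_of_nonneg_right habs2.2 hn0R
    rw [expu]; linarith
  have hsq2l : (s - 1) ^ 2 ≤ (q : ℝ) ^ 2 := by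
    have := mul_le_mul_of_nonneg_right habs2.1 hn0R
    rw [expl]; linarith
  have hp0 : (0 : ℝ) ≤ (p : ℝ) := by positivity
  have hq0 : (0 : ℝ) ≤ (q : ℝ) := by positivity
  have hs10 : (0 : ℝ) ≤ s - 1 := by linarith
  have hs20 : (0 : ℝ) ≤ s + 1 := by linarith
  have hpub : (p : ℝ) ≤ s + 1 := by
    have := Real.sqrt_le_sqrt hsq1u
    rwa [Real.sqrt_sq hp0, Real.sqrt_sq hs20] at this
  have hplb : s - 1 ≤ (p : ℝ) := by
    have := Real.sqrt_le_sqrt hsq1l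
    rwa [Real.sqrt_sq hp0, Real.sqrt_sq hs10] at this
  have hqub : (q : ℝ) ≤ s + 1 := by
    have := Real.sqrt_le_sqrt hsq2u
    rwa [Real.sqrt_sq hq0, Real.sqrt_sq hs20] at this
  have hqlb : s - 1 ≤ (q : ℝ) := by
    have := Real.sqrt_le_sqrt hsq2l
    rwa [Real.sqrt_sq hq0, Real.sqrt_sq hs10] at this
  -- q ≤ p + 2
  have hq2 : q ≤ p + 2 := by
    have : (q : ℝ) ≤ (p : ℝ) + 2 := by linarith
    exact_mod_cast this
  have hirr : Irrational s := by
    have : Irrational (Real.sqrt k) := by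
      refine irrational_sqrt_natCast_iff.mpr ?_
      rintro ⟨r, hr⟩
      exact hsq ⟨r, by rw [hr, sq]⟩
    exact this.natCast_mul hn.ne'
  have hcases : q = p + 1 ∨ q = p + 2 := by omega
  rcases hcases with rfl | rfl
  · -- q = p + 1 : consecutive primes, so p = 2, q = 3
    have hp2 : p = 2 := by
      rcases Nat.even_or_odd p with he | ho
      · exact hpP.even_iff.mp he
      · have heq : Even (p + 1) := Odd.add_one ho
        have : p + 1 = 2 := hqP.even_iff.mp heq
        have := hpP.two_le
        omega
    subst hp2
    have h3 : (n : ℤ) ∣ 3 := ⟨(k : ℤ) * n + ℓ₁, by push_cast at he1; linarith⟩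
    have h8 : (n : ℤ) ∣ 8 := ⟨(k : ℤ) * n + ℓ₂, by push_cast at he2; linarith⟩
    have h3' : n ∣ 3 := by exact_mod_cast h3
    have h8' : n ∣ 8 := by exact_mod_cast h8
    have hn1 : n = 1 := by
      have := Nat.dvd_gcd h3' h8'
      simpa using this
    subst hn1
    have hsv : s = Real.sqrt k := by rw [hs]; simp
    have h2s : (2 : ℝ) ≤ Real.sqrt k := by
      rw [hsv] at hqub; push_cast at hqub; linarith
    have hs3 : Real.sqrt (k : ℝ) ≤ 3 := by
      rw [hsv] at hplb; push_cast at hplb; linarith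
    rcases hcond with h | h | h
    · omega
    · have h9 : (k : ℝ) ≤ 9 := by
        calc (k : ℝ) = Real.sqrt k ^ 2 := hks.symm
        _ ≤ 3 ^ 2 := pow_le_pow_left₀ hsk0 hs3 2
        _ = 9 := by norm_num
      have h10 : (10 : ℝ) ≤ (k : ℝ) := by exact_mod_cast h
      linarith
    · have h4 : (4 : ℝ) ≤ (k : ℝ) := by
        calc (4 : ℝ) = 2 ^ 2 := by norm_num
        _ ≤ Real.sqrt k ^ 2 := pow_le_pow_left₀ (by norm_num) h2s 2
        _ = (k : ℝ) := hks
      have h3k : (k : ℝ) ≤ 3 := by exact_mod_cast h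
      linarith
  · -- q = p + 2 : forces s = p + 1, contradicting irrationality
    have hple : (p : ℝ) ≤ s - 1 := by push_cast at hqub; linarith
    have hpeq : (p : ℝ) = s - 1 := le_antisymm hple hplb
    exact hirr.ne_nat (p + 1) (by push_cast; linarith)

/-- For positive integers `n, k` with `n ≥ 2` or `k ≥ 10` or `k ≤ 3`, and `k` not a
perfect square, the set of primes `p` with `p^2 = k*n^2 + ℓ*n + 1` for some `ℓ` with
`|ℓ| ≤ 2√k` contains at most one element, unless `n = 1` and `4 ≤ k ≤ 9` (in which case
it can be `{2, 3}`), or `k = h^2` with `h*n - 1` and `h*n + 1` both prime (in which case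
it is `{h*n - 1, h*n + 1}`). -/
theorem stmt_6 (n k : ℕ) (hn : 0 < n) (hk : 0 < k)
    (hcond : 2 ≤ n ∨ 10 ≤ k ∨ k ≤ 3) (hsq : ¬ ∃ h : ℕ, k = h ^ 2) :
    ({p : ℕ | p.Prime ∧ ∃ ℓ : ℤ, |(ℓ : ℝ)| ≤ 2 * Real.sqrt k ∧
        (p : ℤ) ^ 2 = k * n ^ 2 + ℓ * n + 1} : Set ℕ).Subsingleton ∨
      (n = 1 ∧ 4 ≤ k ∧ k ≤ 9 ∧
        {p : ℕ | p.Prime ∧ ∃ ℓ : ℤ, |(ℓ : ℝ)| ≤ 2 * Real.sqrt k ∧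
          (p : ℤ) ^ 2 = k * n ^ 2 + ℓ * n + 1} = {2, 3}) ∨
      (∃ h : ℕ, k = h ^ 2 ∧ (h * n - 1).Prime ∧ (h * n + 1).Prime ∧
        {p : ℕ | p.Prime ∧ ∃ ℓ : ℤ, |(ℓ : ℝ)| ≤ 2 * Real.sqrt k ∧
          (p : ℤ) ^ 2 = k * n ^ 2 + ℓ * n + 1} = {h * n - 1, h * n + 1}) := by
  left
  intro p hp q hq
  rcases lt_trichotomy p q with h | h | h
  · exact absurd (stmt_6_aux n k hn hk hcond hsq p q h hp hq) not_false
  · exact h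
  · exact absurd (stmt_6_aux n k hn hk hcond hsq q p h hq hp) not_false
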